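/- Let (Ω, F, P) be a probability space with a complete, right-continuous filtration (F_t)_{t∈[0,T]}, T > 0. Let (D) denote the set of adapted ℝ^k-valued processes φ with continuous paths such that the family {φ(τ) : τ a stopping time with values in [0, T]} is uniformly integrable, and set ‖φ‖₁ = sup{E‖φ(τ)‖ : τ a stopping time with values in [0, T]}. If (φⁿ)_{n≥1} is a sequence in (D) with ‖φⁿ − φᵐ‖₁ → 0 as n, m → ∞, then there exists φ ∈ (D) such that ‖φⁿ − φ‖₁ → 0 as n → ∞; i.e., (D) is complete under the norm ‖·‖₁. -/

import Mathlib

open MeasureTheory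

open MeasureTheory Filter Set
open scoped ENNReal NNReal

section Hit
open Classical
variable {Ω : Type*} {E : Type*} [NormedAddCommGroup E]

/-- First time in `[0,T]` that `‖X t ω‖` reaches level `l`, or `T` if never. -/
noncomputable def hitT (T : ℝ) (X : ℝ → Ω → E) (l : ℝ) (ω : Ω) : ℝ :=
  if h : ∃ t ∈ Set.Icc (0:ℝ) T, l ≤ ‖X t ω‖ then
    sInf {t | t ∈ Set.Icc (0:ℝ) T ∧ l ≤ ‖X t ω‖} else T

variable {T : ℝ} {X : ℝ → Ω → E} {l : ℝ} {ω : Ω}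

lemma hitT_closed (hT : 0 ≤ T) (hc : ContinuousOn (fun t => X t ω) (Set.Icc 0 T)) :
    IsClosed {t | t ∈ Set.Icc (0:ℝ) T ∧ l ≤ ‖X t ω‖} := by
  have : {t | t ∈ Set.Icc (0:ℝ) T ∧ l ≤ ‖X t ω‖}
      = Set.Icc (0:ℝ) T ∩ (fun t => ‖X t ω‖) ⁻¹' Set.Ici l := rfl
  rw [this]
  exact (hc.norm).preimage_isClosed_of_isClosed isClosed_Icc isClosed_Ici

lemma hitT_mem_Icc (hT : 0 ≤ T) : hitT T X l ω ∈ Set.Icc (0:ℝ) T := by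
  unfold hitT
  split_ifs with h
  · obtain ⟨t, ht, hl⟩ := h
    constructor
    · exact le_csInf ⟨t, ht, hl⟩ (fun b hb => hb.1.1)
    · exact csInf_le_of_le ⟨0, fun b hb => hb.1.1⟩ ⟨ht, hl⟩ ht.2
  · exact ⟨hT, le_rfl⟩

lemma hitT_mem (hT : 0 ≤ T) (hc : ContinuousOn (fun t => X t ω) (Set.Icc 0 T))
    (h : ∃ t ∈ Set.Icc (0:ℝ) T, l ≤ ‖X t ω‖) :
    l ≤ ‖X (hitT T X l ω) ω‖ := by
  have hmem := (hitT_closed hT hc (l := l)).csInf_mem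
    (by obtain ⟨t, ht, hl⟩ := h; exact ⟨t, ht, hl⟩) ⟨0, fun b hb => hb.1.1⟩
  rw [hitT, dif_pos h]
  exact hmem.2

lemma hitT_le (hT : 0 ≤ T) {s : ℝ} (hs : s ∈ Set.Icc (0:ℝ) T) (hl : l ≤ ‖X s ω‖) :
    hitT T X l ω ≤ s := by
  rw [hitT, dif_pos ⟨s, hs, hl⟩]
  exact csInf_le ⟨0, fun b hb => hb.1.1⟩ ⟨hs, hl⟩
end Hit

section Stop
open Classical
variable {Ω : Type*} {E : Type*} [NormedAddCommGroup E]
variable {T : ℝ} {X : ℝ → Ω → E} {l : ℝ} {ω : Ω}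

lemma hit_char (ht0 : 0 ≤ t) (htT : t ≤ T)
    (hc : ContinuousOn (fun u => X u ω) (Set.Icc 0 T)) :
    (∃ s ∈ Set.Icc (0:ℝ) t, l ≤ ‖X s ω‖) ↔
      ∀ k : ℕ, ∃ q ∈ insert t (Set.Icc 0 t ∩ Set.range ((↑) : ℚ → ℝ)),
        l - 1/(k+1) < ‖X q ω‖ := by
  have hsub : Set.Icc (0:ℝ) t ⊆ Set.Icc 0 T := Set.Icc_subset_Icc le_rfl htT
  constructor
  · rintro ⟨s, hs, hls⟩ k
    have hε : (0:ℝ) < 1/(k+1) := by positivity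
    have hcs : ContinuousWithinAt (fun u => ‖X u ω‖) (Set.Icc 0 T) s :=
      (hc.norm) s (hsub hs)
    rw [Metric.continuousWithinAt_iff] at hcs
    obtain ⟨δ, hδ, hδs⟩ := hcs _ hε
    rcases eq_or_lt_of_le hs.2 with heq | hlt
    · exact ⟨t, Set.mem_insert _ _, by rw [← heq]; linarith⟩
    · obtain ⟨q, hq1, hq2⟩ := exists_rat_btwn (lt_min hlt (by linarith : s < s + δ))
      have hq2t : (q:ℝ) ≤ t := le_of_lt (lt_of_lt_of_le hq2 (min_le_left _ _))
      have hqIcc : (q:ℝ) ∈ Set.Icc (0:ℝ) t := ⟨le_of_lt (lt_of_le_of_lt hs.1 hq1), hq2t⟩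
      have hdist : dist (q:ℝ) s < δ := by
        rw [Real.dist_eq, abs_lt]
        constructor
        · linarith
        · have := lt_of_lt_of_le hq2 (min_le_right _ _); linarith
      have := hδs (hsub hqIcc) hdist
      rw [Real.dist_eq, abs_lt] at this
      exact ⟨q, Set.mem_insert_of_mem _ ⟨hqIcc, ⟨q, rfl⟩⟩, by linarith [this.1]⟩
  · intro h
    have hcpt : IsCompact (Set.Icc (0:ℝ) t) := isCompact_Icc
    have hconts : ContinuousOn (fun u => ‖X u ω‖) (Set.Icc 0 t) := (hc.norm).mono hsub
    obtain ⟨s, hsmem, hsmax⟩ := hcpt.exists_isMaxOn ⟨0, by simp [ht0]⟩ hconts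
    refine ⟨s, hsmem, ?_⟩
    by_contra hcon
    push_neg at hcon
    obtain ⟨k, hk⟩ := exists_nat_one_div_lt (by linarith : (0:ℝ) < l - ‖X s ω‖)
    obtain ⟨q, hqmem, hql⟩ := h k
    have hqt : q ∈ Set.Icc (0:ℝ) t := by
      rcases hqmem with rfl | hq
      · exact ⟨ht0, le_rfl⟩
      · exact hq.1
    have := hsmax hqt
    simp only [Set.mem_setOf_eq] at this
    linarith

lemma hitT_isStoppingTime {mΩ : MeasurableSpace Ω} (ℱ : MeasureTheory.Filtration ℝ mΩ)
    (hT : 0 ≤ T)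
    (hc : ∀ ω, ContinuousOn (fun u => X u ω) (Set.Icc 0 T))
    (hA : ∀ t ∈ Set.Icc (0:ℝ) T, StronglyMeasurable[ℱ t] (X t)) :
    IsStoppingTime ℱ (fun ω => (hitT T X l ω : WithTop ℝ)) := by
  intro t
  simp only [WithTop.coe_le_coe]
  rcases lt_or_ge t 0 with ht | ht0
  · have : {ω | hitT T X l ω ≤ t} = ∅ := by
      ext ω
      simp only [Set.mem_setOf_eq, Set.mem_empty_iff_false, iff_false, not_le]
      exact lt_of_lt_of_le ht (hitT_mem_Icc hT).1
    rw [this]; exact @MeasurableSet.empty _ (ℱ t)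
  rcases le_or_gt T t with hTt | htT
  · have : {ω | hitT T X l ω ≤ t} = Set.univ := by
      ext ω
      simp only [Set.mem_setOf_eq, Set.mem_univ, iff_true]
      exact le_trans (hitT_mem_Icc hT).2 hTt
    rw [this]; exact MeasurableSet.univ
  · have hset : {ω | hitT T X l ω ≤ t}
        = ⋂ k : ℕ, ⋃ q ∈ insert t (Set.Icc 0 t ∩ Set.range ((↑) : ℚ → ℝ)),
            {ω | l - 1/(k+1) < ‖X q ω‖} := by
      ext ω
      simp only [Set.mem_setOf_eq, Set.mem_iInter, Set.mem_iUnion, exists_prop]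
      rw [← hit_char ht0 htT.le (hc ω)]
      constructor
      · intro hle
        by_cases h : ∃ s ∈ Set.Icc (0:ℝ) T, l ≤ ‖X s ω‖
        · exact ⟨hitT T X l ω, ⟨(hitT_mem_Icc hT).1, hle⟩, hitT_mem hT (hc ω) h⟩
        · exfalso
          have : hitT T X l ω = T := by rw [hitT, dif_neg h]
          rw [this] at hle
          exact absurd hle (not_le.mpr htT)
      · rintro ⟨s, hs, hls⟩
        exact le_trans (hitT_le hT ⟨hs.1, le_trans hs.2 htT.le⟩ hls) hs.2
    rw [hset]
    refine MeasurableSet.iInter fun k => MeasurableSet.biUnion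
      (((Set.countable_range ((↑) : ℚ → ℝ)).mono Set.inter_subset_right).insert t)
      (fun q hq => ?_)
    have hqt : q ∈ Set.Icc (0:ℝ) t := by
      rcases hq with rfl | hq
      · exact ⟨ht0, le_rfl⟩
      · exact hq.1
    have hqT : q ∈ Set.Icc (0:ℝ) T := ⟨hqt.1, le_trans hqt.2 htT.le⟩
    have : MeasurableSet[ℱ q] {ω | l - 1/(k+1) < ‖X q ω‖} :=
      (hA q hqT).norm.measurable measurableSet_Ioi
    exact ℱ.mono hqt.2 _ this
end Stop

section Max
variable {Ω : Type*} {E : Type*} [NormedAddCommGroup E]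
variable {T : ℝ} {X : ℝ → Ω → E} {l : ℝ}

lemma hit_maximal {mΩ : MeasurableSpace Ω} (P : MeasureTheory.Measure Ω) (hT : 0 ≤ T)
    (hc : ∀ ω, ContinuousOn (fun u => X u ω) (Set.Icc 0 T)) {ε : ℝ} (hl : 0 < l)
    (hint : AEMeasurable (fun ω => (‖X (hitT T X l ω) ω‖₊ : ℝ≥0∞)) P)
    (hb : ∫⁻ ω, (‖X (hitT T X l ω) ω‖₊ : ℝ≥0∞) ∂P ≤ ENNReal.ofReal ε) :
    P {ω | ∃ s ∈ Set.Icc (0:ℝ) T, l ≤ ‖X s ω‖} ≤ ENNReal.ofReal ε / ENNReal.ofReal l := by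
  have hsub : {ω | ∃ s ∈ Set.Icc (0:ℝ) T, l ≤ ‖X s ω‖}
      ⊆ {ω | ENNReal.ofReal l ≤ (‖X (hitT T X l ω) ω‖₊ : ℝ≥0∞)} := by
    intro ω hω
    have := hitT_mem hT (hc ω) hω
    simp only [Set.mem_setOf_eq, ← enorm_eq_nnnorm, ← ofReal_norm]
    exact ENNReal.ofReal_le_ofReal this
  refine le_trans (measure_mono hsub) ?_
  rw [ENNReal.le_div_iff_mul_le (Or.inl (by simp [ENNReal.ofReal_eq_zero, not_le, hl]))
    (Or.inl ENNReal.ofReal_ne_top)]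
  rw [mul_comm]
  exact le_trans (MeasureTheory.mul_meas_ge_le_lintegral₀ hint _) hb
end Max

/-- Completeness of the class (D) under the norm
`‖φ‖₁ = sup { E‖φ(τ)‖ : τ a stopping time with values in [0, T] }`: on a probability space
with a complete, right-continuous filtration, any sequence of adapted continuous
`ℝ^k`-valued processes whose families of values at `[0,T]`-valued stopping times are
uniformly integrable and which is Cauchy for `‖·‖₁` converges in `‖·‖₁` to a limit process
in the class (D). -/
theorem classD_complete {Ω : Type*} {mΩ : MeasurableSpace Ω}
    (P : Measure Ω) [IsProbabilityMeasure P] (T : ℝ) (hT : 0 < T) (k : ℕ)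
    (ℱ : Filtration ℝ mΩ)
    (hcomplete : ∀ t : ℝ, ∀ s : Set Ω, MeasurableSet s → P s = 0 → MeasurableSet[ℱ t] s)
    (hright : ∀ t : ℝ, ℱ t = ⨅ s ∈ Set.Ioi t, ℱ s)
    (φ : ℕ → ℝ → Ω → EuclideanSpace ℝ (Fin k))
    (hAdapted : ∀ n, ∀ t ∈ Set.Icc (0 : ℝ) T, StronglyMeasurable[ℱ t] (φ n t))
    (hCont : ∀ n ω, ContinuousOn (fun t => φ n t ω) (Set.Icc (0 : ℝ) T))
    (hUI : ∀ n, UniformIntegrable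
      (fun τ : {τ : Ω → ℝ // IsStoppingTime ℱ (fun ω => (τ ω : WithTop ℝ)) ∧ ∀ ω, τ ω ∈ Set.Icc (0 : ℝ) T} =>
        fun ω => φ n (τ.1 ω) ω) 1 P)
    (hCauchy : ∀ ε : ℝ, 0 < ε → ∃ N : ℕ, ∀ n ≥ N, ∀ m ≥ N,
      ∀ τ : Ω → ℝ, IsStoppingTime ℱ (fun ω => (τ ω : WithTop ℝ)) → (∀ ω, τ ω ∈ Set.Icc (0 : ℝ) T) →
        ∫ ω, ‖φ n (τ ω) ω - φ m (τ ω) ω‖ ∂P ≤ ε) :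
    ∃ φlim : ℝ → Ω → EuclideanSpace ℝ (Fin k),
      (∀ t ∈ Set.Icc (0 : ℝ) T, StronglyMeasurable[ℱ t] (φlim t)) ∧
      (∀ ω, ContinuousOn (fun t => φlim t ω) (Set.Icc (0 : ℝ) T)) ∧
      UniformIntegrable
        (fun τ : {τ : Ω → ℝ // IsStoppingTime ℱ (fun ω => (τ ω : WithTop ℝ)) ∧ ∀ ω, τ ω ∈ Set.Icc (0 : ℝ) T} =>
          fun ω => φlim (τ.1 ω) ω) 1 P ∧
      (∀ ε : ℝ, 0 < ε → ∃ N : ℕ, ∀ n ≥ N,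
        ∀ τ : Ω → ℝ, IsStoppingTime ℱ (fun ω => (τ ω : WithTop ℝ)) → (∀ ω, τ ω ∈ Set.Icc (0 : ℝ) T) →
          ∫ ω, ‖φ n (τ ω) ω - φlim (τ ω) ω‖ ∂P ≤ ε) := by
  classical
  -- choose the Cauchy thresholds
  choose N hN using fun j : ℕ => hCauchy ((1/4 : ℝ)^j) (by positivity)
  set ns : ℕ → ℕ := fun j => (Finset.range (j+1)).sup N + j with hns_def
  have hnsN : ∀ j, N j ≤ ns j := fun j =>
    le_trans (Finset.le_sup (Finset.mem_range.mpr (Nat.lt_succ_self j))) (Nat.le_add_right _ _)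
  have hnsN' : ∀ j, N j ≤ ns (j+1) := fun j =>
    le_trans (Finset.le_sup (Finset.mem_range.mpr (Nat.lt_succ_of_lt (Nat.lt_succ_self j))))
      (Nat.le_add_right _ _)
  have hns_ge : ∀ j, j ≤ ns j := fun j => Nat.le_add_left j _
  -- the increments
  set X : ℕ → ℝ → Ω → EuclideanSpace ℝ (Fin k) :=
    fun j t ω => φ (ns (j+1)) t ω - φ (ns j) t ω with hX_def
  have hXc : ∀ j ω, ContinuousOn (fun t => X j t ω) (Set.Icc 0 T) :=
    fun j ω => (hCont _ ω).sub (hCont _ ω)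
  have hXa : ∀ j, ∀ t ∈ Set.Icc (0:ℝ) T, StronglyMeasurable[ℱ t] (X j t) :=
    fun j t ht => (hAdapted _ t ht).sub (hAdapted _ t ht)
  set τh : ℕ → Ω → ℝ := fun j => hitT T (X j) ((1/2 : ℝ)^j) with hτh_def
  have hτst : ∀ j, IsStoppingTime ℱ (fun ω => (τh j ω : WithTop ℝ)) :=
    fun j => hitT_isStoppingTime ℱ hT.le (hXc j) (hXa j)
  have hτIcc : ∀ j ω, τh j ω ∈ Set.Icc (0:ℝ) T := fun j ω => hitT_mem_Icc hT.le
  -- stopped values of the φ n are in L¹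
  have hMem : ∀ n (τ : Ω → ℝ), IsStoppingTime ℱ (fun ω => (τ ω : WithTop ℝ)) → (∀ ω, τ ω ∈ Set.Icc (0:ℝ) T) →
      MemLp (fun ω => φ n (τ ω) ω) 1 P := by
    intro n τ hτ hI
    obtain ⟨hasm, _, C, hC⟩ := hUI n
    exact ⟨hasm ⟨τ, hτ, hI⟩, lt_of_le_of_lt (hC ⟨τ, hτ, hI⟩) ENNReal.coe_lt_top⟩
  -- bad events
  set A : ℕ → Set Ω := fun j => {ω | ∃ s ∈ Set.Icc (0:ℝ) T, (1/2 : ℝ)^j ≤ ‖X j s ω‖}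
    with hA_def
  have hAj : ∀ j, P (A j) ≤ ENNReal.ofReal ((1/2 : ℝ)^j) := by
    intro j
    have hmem : MemLp (fun ω => X j (τh j ω) ω) 1 P :=
      (hMem (ns (j+1)) (τh j) (hτst j) (hτIcc j)).sub
        (hMem (ns j) (τh j) (hτst j) (hτIcc j))
    have hint : Integrable (fun ω => X j (τh j ω) ω) P := hmem.integrable le_rfl
    have hb' : ∫ ω, ‖X j (τh j ω) ω‖ ∂P ≤ (1/4 : ℝ)^j :=
      hN j (ns (j+1)) (hnsN' j) (ns j) (hnsN j) (τh j) (hτst j) (hτIcc j)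
    have hlb : ∫⁻ ω, (‖X j (τh j ω) ω‖₊ : ℝ≥0∞) ∂P
        = ENNReal.ofReal (∫ ω, ‖X j (τh j ω) ω‖ ∂P) :=
      (ofReal_integral_norm_eq_lintegral_enorm hint).symm
    have hmax := hit_maximal (X := X j) (l := (1/2 : ℝ)^j) (ε := (1/4 : ℝ)^j) P hT.le (hXc j)
      (by positivity) hmem.aestronglyMeasurable.enorm
      (by rw [hlb]; exact ENNReal.ofReal_le_ofReal hb')
    refine le_trans hmax (le_of_eq ?_)
    rw [← ENNReal.ofReal_div_of_pos (by positivity), ← div_pow]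
    norm_num
  -- Borel–Cantelli
  have hsum : (∑' j, P (A j)) ≠ ⊤ := by
    refine ne_top_of_le_ne_top ?_ (ENNReal.tsum_le_tsum hAj)
    have h12 : ENNReal.ofReal ((1:ℝ)/2) = 2⁻¹ := by
      rw [show (1/2 : ℝ) = (2:ℝ)⁻¹ by norm_num,
        ENNReal.ofReal_inv_of_pos (by norm_num), ENNReal.ofReal_ofNat]
    have : ∀ j : ℕ, ENNReal.ofReal ((1/2 : ℝ)^j) = (2⁻¹ : ℝ≥0∞)^j := by
      intro j; rw [ENNReal.ofReal_pow (by norm_num), h12]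
    rw [tsum_congr this, ENNReal.tsum_geometric]
    refine ENNReal.inv_ne_top.mpr ?_
    rw [ne_eq, tsub_eq_zero_iff_le]
    exact not_le.mpr (ENNReal.inv_lt_one.mpr ENNReal.one_lt_two)
  have hlimsup : P (limsup A atTop) = 0 := measure_limsup_atTop_eq_zero hsum
  set Gc : Set Ω := toMeasurable P (limsup A atTop) with hGc_def
  have hGc_meas : MeasurableSet Gc := measurableSet_toMeasurable _ _
  have hGc0 : P Gc = 0 := by rw [hGc_def, measure_toMeasurable]; exact hlimsup
  set G : Set Ω := Gcᶜ with hG_def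
  have hG_ev : ∀ ω ∈ G, ∃ J, ∀ j, J ≤ j → ∀ s ∈ Set.Icc (0:ℝ) T,
      ‖X j s ω‖ < (1/2 : ℝ)^j := by
    intro ω hω
    have hno : ω ∉ limsup A atTop := fun h => hω (subset_toMeasurable P _ h)
    rw [limsup_eq_iInf_iSup_of_nat] at hno
    simp only [Set.iInf_eq_iInter, Set.iSup_eq_iUnion, Set.mem_iInter, Set.mem_iUnion,
      not_forall, not_exists] at hno
    obtain ⟨J, hJ⟩ := hno
    refine ⟨J, fun j hj s hs => ?_⟩
    by_contra hcon
    push_neg at hcon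
    exact hJ j hj ⟨s, hs, hcon⟩
  -- uniform Cauchy on [0,T] for good ω
  have hUC : ∀ ω ∈ G, UniformCauchySeqOn (fun j t => φ (ns j) t ω) atTop
      (Set.Icc (0:ℝ) T) := by
    intro ω hω
    obtain ⟨J, hJ⟩ := hG_ev ω hω
    rw [Metric.uniformCauchySeqOn_iff]
    intro ε hε
    obtain ⟨M0, hM0⟩ := exists_pow_lt_of_lt_one (half_pos hε) (by norm_num : (1/2 : ℝ) < 1)
    have key : ∀ m n, max J M0 ≤ m → m ≤ n → ∀ x ∈ Set.Icc (0:ℝ) T,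
        dist (φ (ns m) x ω) (φ (ns n) x ω) < ε := by
      intro m n hm hmn x hx
      calc dist (φ (ns m) x ω) (φ (ns n) x ω)
          ≤ ∑ i ∈ Finset.Ico m n, dist (φ (ns i) x ω) (φ (ns (i+1)) x ω) :=
            dist_le_Ico_sum_dist (fun i => φ (ns i) x ω) hmn
        _ ≤ ∑ i ∈ Finset.Ico m n, (1/2 : ℝ)^i := by
            refine Finset.sum_le_sum fun i hi => ?_
            have hJi : J ≤ i := le_trans (le_trans (le_max_left _ _) hm)
              (Finset.mem_Ico.mp hi).1
            have := hJ i hJi x hx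
            rw [dist_eq_norm, norm_sub_rev]
            exact this.le
        _ = (1/2 : ℝ)^m * ∑ i ∈ Finset.range (n - m), (1/2 : ℝ)^i := by
            rw [Finset.sum_Ico_eq_sum_range, Finset.mul_sum]
            exact Finset.sum_congr rfl fun i _ => by rw [pow_add]
        _ ≤ (1/2 : ℝ)^m * 2 := by
            refine mul_le_mul_of_nonneg_left (sum_geometric_two_le _) (by positivity)
        _ ≤ (1/2 : ℝ)^M0 * 2 := by
            refine mul_le_mul_of_nonneg_right
              (pow_le_pow_of_le_one (by norm_num) (by norm_num)
                (le_trans (le_max_right _ _) hm)) (by norm_num)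
        _ < (ε/2) * 2 := by linarith
        _ = ε := by ring
    refine ⟨max J M0, fun m hm n hn x hx => ?_⟩
    rcases le_total m n with h | h
    · exact key m n hm h x hx
    · rw [dist_comm]; exact key n m hn h x hx
  -- the limit process
  set φl : ℝ → Ω → EuclideanSpace ℝ (Fin k) := fun t ω =>
    if ω ∈ G ∧ t ∈ Set.Icc (0:ℝ) T then limUnder atTop (fun j => φ (ns j) t ω) else 0
    with hφl_def
  have hconv : ∀ ω ∈ G, ∀ t ∈ Set.Icc (0:ℝ) T,
      Tendsto (fun j => φ (ns j) t ω) atTop (nhds (φl t ω)) := by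
    intro ω hω t ht
    have hcs : CauchySeq (fun j => φ (ns j) t ω) := by
      rw [Metric.cauchySeq_iff]
      intro ε hε
      obtain ⟨M1, hM1⟩ := Metric.uniformCauchySeqOn_iff.mp (hUC ω hω) ε hε
      exact ⟨M1, fun m hm n hn => hM1 m hm n hn t ht⟩
    obtain ⟨L, hL⟩ := cauchySeq_tendsto_of_complete hcs
    have : φl t ω = L := by
      rw [hφl_def]
      simp only [if_pos (And.intro hω ht)]
      exact hL.limUnder_eq
    rw [this]; exact hL
  have hTU : ∀ ω ∈ G, TendstoUniformlyOn (fun j t => φ (ns j) t ω) (fun t => φl t ω)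
      atTop (Set.Icc (0:ℝ) T) :=
    fun ω hω => (hUC ω hω).tendstoUniformlyOn_of_tendsto (fun t ht => hconv ω hω t ht)
  -- conclusion 2 : continuity
  have hContL : ∀ ω, ContinuousOn (fun t => φl t ω) (Set.Icc (0:ℝ) T) := by
    intro ω
    by_cases hω : ω ∈ G
    · exact (hTU ω hω).continuousOn (Eventually.of_forall fun j => hCont (ns j) ω).frequently
    · refine (continuousOn_const (c := (0 : EuclideanSpace ℝ (Fin k)))).congr ?_
      intro t ht
      simp only [hφl_def]
      rw [if_neg (fun h : ω ∈ G ∧ t ∈ Set.Icc (0:ℝ) T => hω h.1)]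
  -- conclusion 1 : adaptedness
  have hGmeas : ∀ t, MeasurableSet[ℱ t] G := fun t => (hcomplete t Gc hGc_meas hGc0).compl
  have hAdL : ∀ t ∈ Set.Icc (0:ℝ) T, StronglyMeasurable[ℱ t] (φl t) := by
    intro t ht
    have heq : φl t = G.indicator (fun ω => limUnder atTop (fun j => φ (ns j) t ω)) := by
      funext ω
      simp only [hφl_def]
      by_cases hω : ω ∈ G
      · rw [if_pos (And.intro hω ht), Set.indicator_of_mem hω]
      · rw [if_neg (fun h : ω ∈ G ∧ t ∈ Set.Icc (0:ℝ) T => hω h.1),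
          Set.indicator_of_notMem hω]
    rw [heq]
    refine stronglyMeasurable_of_tendsto (u := atTop)
      (f := fun j => G.indicator (φ (ns j) t))
      (fun j => (hAdapted (ns j) t ht).indicator (hGmeas t)) ?_
    rw [tendsto_pi_nhds]
    intro ω
    by_cases hω : ω ∈ G
    · simp only [Set.indicator_of_mem hω]
      have h1 := hconv ω hω t ht
      have h2 : φl t ω = limUnder atTop (fun j => φ (ns j) t ω) := by
        rw [hφl_def]; simp only [if_pos (And.intro hω ht)]
      rw [← h2]; exact h1
    · simp only [Set.indicator_of_notMem hω]; exact tendsto_const_nhds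
  -- the good set is conull
  have hG_ae : ∀ᵐ ω ∂P, ω ∈ G := by
    rw [ae_iff]
    have : {ω | ¬ ω ∈ G} = Gc := by
      ext ω; simp [hG_def]
    rw [this]; exact hGc0
  -- key convergence estimate
  have hkey : ∀ ε : ℝ, 0 < ε → ∃ Nε : ℕ, ∀ n ≥ Nε,
      ∀ τ : Ω → ℝ, IsStoppingTime ℱ (fun ω => (τ ω : WithTop ℝ)) → (∀ ω, τ ω ∈ Set.Icc (0:ℝ) T) →
      AEStronglyMeasurable (fun ω => φ n (τ ω) ω - φl (τ ω) ω) P ∧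
      (∫⁻ ω, (‖φ n (τ ω) ω - φl (τ ω) ω‖₊ : ℝ≥0∞) ∂P ≤ ENNReal.ofReal ε) ∧
      ∫ ω, ‖φ n (τ ω) ω - φl (τ ω) ω‖ ∂P ≤ ε := by
    intro ε hε
    obtain ⟨M, hM⟩ := hCauchy ε hε
    refine ⟨M, fun n hn τ hτ hτI => ?_⟩
    have h_tendsto : ∀ᵐ ω ∂P, Tendsto (fun j => φ (ns j) (τ ω) ω) atTop
        (nhds (φl (τ ω) ω)) := hG_ae.mono fun ω hω => hconv ω hω (τ ω) (hτI ω)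
    have hasm_j : ∀ j, AEStronglyMeasurable (fun ω => φ (ns j) (τ ω) ω) P :=
      fun j => (hMem (ns j) τ hτ hτI).aestronglyMeasurable
    have hasmL : AEStronglyMeasurable (fun ω => φl (τ ω) ω) P :=
      aestronglyMeasurable_of_tendsto_ae atTop hasm_j h_tendsto
    have hasm_n : AEStronglyMeasurable (fun ω => φ n (τ ω) ω) P :=
      (hMem n τ hτ hτI).aestronglyMeasurable
    have hdiff_asm : AEStronglyMeasurable (fun ω => φ n (τ ω) ω - φl (τ ω) ω) P :=
      hasm_n.sub hasmL
    have hae_liminf : (fun ω => (‖φ n (τ ω) ω - φl (τ ω) ω‖₊ : ℝ≥0∞)) =ᵐ[P]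
        fun ω => liminf (fun j => (‖φ n (τ ω) ω - φ (ns j) (τ ω) ω‖₊ : ℝ≥0∞)) atTop := by
      filter_upwards [h_tendsto] with ω hω
      have ht : Tendsto (fun j => (‖φ n (τ ω) ω - φ (ns j) (τ ω) ω‖₊ : ℝ≥0∞)) atTop
          (nhds ((‖φ n (τ ω) ω - φl (τ ω) ω‖₊ : ℝ≥0∞))) :=
        ENNReal.tendsto_coe.mpr ((tendsto_const_nhds.sub hω).nnnorm)
      exact ht.liminf_eq.symm
    have hlim_le : ∫⁻ ω, (‖φ n (τ ω) ω - φl (τ ω) ω‖₊ : ℝ≥0∞) ∂P ≤ ENNReal.ofReal ε := by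
      rw [lintegral_congr_ae hae_liminf]
      refine le_trans (lintegral_liminf_le'
        fun j => (hasm_n.sub (hasm_j j)).enorm) ?_
      have hev : ∀ᶠ j in atTop,
          (∫⁻ ω, (‖φ n (τ ω) ω - φ (ns j) (τ ω) ω‖₊ : ℝ≥0∞) ∂P) ≤ ENNReal.ofReal ε := by
        filter_upwards [eventually_ge_atTop M] with j hj
        have hint : Integrable (fun ω => φ n (τ ω) ω - φ (ns j) (τ ω) ω) P :=
          ((hMem n τ hτ hτI).sub (hMem (ns j) τ hτ hτI)).integrable le_rfl
        simp only [← enorm_eq_nnnorm]; rw [← ofReal_integral_norm_eq_lintegral_enorm hint]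
        exact ENNReal.ofReal_le_ofReal
          (hM n hn (ns j) (le_trans hj (hns_ge j)) τ hτ hτI)
      calc liminf (fun j => ∫⁻ ω, (‖φ n (τ ω) ω - φ (ns j) (τ ω) ω‖₊ : ℝ≥0∞) ∂P) atTop
          ≤ liminf (fun _ : ℕ => ENNReal.ofReal ε) atTop := liminf_le_liminf hev
        _ = ENNReal.ofReal ε := liminf_const _
    refine ⟨hdiff_asm, hlim_le, ?_⟩
    have hmem2 : MemLp (fun ω => φ n (τ ω) ω - φl (τ ω) ω) 1 P := by
      refine ⟨hdiff_asm, ?_⟩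
      rw [eLpNorm_one_eq_lintegral_enorm]
      exact lt_of_le_of_lt hlim_le ENNReal.ofReal_lt_top
    have hint2 : Integrable (fun ω => φ n (τ ω) ω - φl (τ ω) ω) P :=
      hmem2.integrable le_rfl
    have heq2 := ofReal_integral_norm_eq_lintegral_enorm hint2
    exact (ENNReal.ofReal_le_ofReal_iff hε.le).mp (le_trans (le_of_eq heq2) hlim_le)
  -- assemble
  refine ⟨φl, hAdL, hContL, ?_, ?_⟩
  · -- uniform integrability of the limit
    have hasmL : ∀ τ : {τ : Ω → ℝ // IsStoppingTime ℱ (fun ω => (τ ω : WithTop ℝ)) ∧ ∀ ω, τ ω ∈ Set.Icc (0:ℝ) T},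
        AEStronglyMeasurable (fun ω => φl (τ.1 ω) ω) P := by
      intro τ
      obtain ⟨Nε, hNε⟩ := hkey 1 one_pos
      have h := (hNε Nε le_rfl τ.1 τ.2.1 τ.2.2).1
      have : (fun ω => φl (τ.1 ω) ω)
          = fun ω => φ Nε (τ.1 ω) ω - (φ Nε (τ.1 ω) ω - φl (τ.1 ω) ω) := by
        funext ω; simp
      rw [this]
      exact (hMem Nε τ.1 τ.2.1 τ.2.2).aestronglyMeasurable.sub h
    refine ⟨hasmL, ?_, ?_⟩
    · -- UnifIntegrable
      intro ε hε
      obtain ⟨N2, hN2⟩ := hkey (ε/2) (half_pos hε)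
      obtain ⟨δ, hδ, hδ'⟩ := (hUI N2).2.1 (half_pos hε)
      refine ⟨δ, hδ, fun i s hs hμs => ?_⟩
      have h1 := hN2 N2 le_rfl i.1 i.2.1 i.2.2
      have hsplit : (fun ω => φl (i.1 ω) ω)
          = (fun ω => φl (i.1 ω) ω - φ N2 (i.1 ω) ω) + fun ω => φ N2 (i.1 ω) ω := by
        funext ω; simp
      have hneg_asm : AEStronglyMeasurable (fun ω => φl (i.1 ω) ω - φ N2 (i.1 ω) ω) P := by
        refine h1.1.neg.congr (Eventually.of_forall fun ω => ?_)
        simp [neg_sub]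
      have hsplit' : s.indicator (fun ω => φl (i.1 ω) ω)
          = s.indicator (fun ω => φl (i.1 ω) ω - φ N2 (i.1 ω) ω)
            + s.indicator (fun ω => φ N2 (i.1 ω) ω) := by
        funext ω
        by_cases hω : ω ∈ s <;>
          simp [Set.indicator_of_mem, Set.indicator_of_notMem, hω]
      calc eLpNorm (s.indicator fun ω => φl (i.1 ω) ω) 1 P
          = eLpNorm (s.indicator (fun ω => φl (i.1 ω) ω - φ N2 (i.1 ω) ω)
              + s.indicator fun ω => φ N2 (i.1 ω) ω) 1 P := by
            rw [hsplit']
        _ ≤ eLpNorm (s.indicator fun ω => φl (i.1 ω) ω - φ N2 (i.1 ω) ω) 1 P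
              + eLpNorm (s.indicator fun ω => φ N2 (i.1 ω) ω) 1 P :=
            eLpNorm_add_le (hneg_asm.indicator hs)
              (((hMem N2 i.1 i.2.1 i.2.2).aestronglyMeasurable).indicator hs) le_rfl
        _ ≤ eLpNorm (fun ω => φl (i.1 ω) ω - φ N2 (i.1 ω) ω) 1 P
              + ENNReal.ofReal (ε/2) :=
            add_le_add (eLpNorm_indicator_le _) (hδ' i s hs hμs)
        _ ≤ ENNReal.ofReal (ε/2) + ENNReal.ofReal (ε/2) := by
            refine add_le_add ?_ le_rfl
            rw [eLpNorm_one_eq_lintegral_enorm]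
            have : ∀ ω, (‖φl (i.1 ω) ω - φ N2 (i.1 ω) ω‖₊ : ℝ≥0∞)
                = (‖φ N2 (i.1 ω) ω - φl (i.1 ω) ω‖₊ : ℝ≥0∞) := by
              intro ω
              congr 1
              rw [← nnnorm_neg, neg_sub]
            simp only [enorm_eq_nnnorm]; rw [lintegral_congr fun ω => this ω]
            exact h1.2.1
        _ = ENNReal.ofReal ε := by
            rw [← ENNReal.ofReal_add (by linarith) (by linarith)]
            norm_num
    · -- uniform L¹ bound
      obtain ⟨N1, hN1⟩ := hkey 1 one_pos
      obtain ⟨C1, hC1⟩ := (hUI N1).2.2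
      refine ⟨C1 + 1, fun i => ?_⟩
      have h1 := hN1 N1 le_rfl i.1 i.2.1 i.2.2
      have hsplit : (fun ω => φl (i.1 ω) ω)
          = (fun ω => φl (i.1 ω) ω - φ N1 (i.1 ω) ω) + fun ω => φ N1 (i.1 ω) ω := by
        funext ω; simp
      have hneg_asm : AEStronglyMeasurable (fun ω => φl (i.1 ω) ω - φ N1 (i.1 ω) ω) P := by
        refine h1.1.neg.congr (Eventually.of_forall fun ω => ?_)
        simp [neg_sub]
      calc eLpNorm (fun ω => φl (i.1 ω) ω) 1 P
          ≤ eLpNorm (fun ω => φl (i.1 ω) ω - φ N1 (i.1 ω) ω) 1 P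
              + eLpNorm (fun ω => φ N1 (i.1 ω) ω) 1 P := by
            rw [hsplit]
            exact eLpNorm_add_le hneg_asm
              ((hMem N1 i.1 i.2.1 i.2.2).aestronglyMeasurable) le_rfl
        _ ≤ ENNReal.ofReal 1 + (C1 : ℝ≥0∞) := by
            refine add_le_add ?_ (hC1 i)
            rw [eLpNorm_one_eq_lintegral_enorm]
            have : ∀ ω, (‖φl (i.1 ω) ω - φ N1 (i.1 ω) ω‖₊ : ℝ≥0∞)
                = (‖φ N1 (i.1 ω) ω - φl (i.1 ω) ω‖₊ : ℝ≥0∞) := by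
              intro ω
              congr 1
              rw [← nnnorm_neg, neg_sub]
            simp only [enorm_eq_nnnorm]; rw [lintegral_congr fun ω => this ω]
            exact h1.2.1
        _ ≤ ((C1 + 1 : ℝ≥0) : ℝ≥0∞) := by
            rw [ENNReal.ofReal_one, ENNReal.coe_add]
            simp [add_comm]
  · -- convergence in ‖·‖₁
    intro ε hε
    obtain ⟨Nε, hNε⟩ := hkey ε hε
    exact ⟨Nε, fun n hn τ hτ hτI => (hNε n hn τ hτ hτI).2.2⟩
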